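/- arXiv:1106.5115 — 9 statements merged into one kernel-verified Lean document; each statement's English description precedes it below -/
import Mathlib

section
/- Let ⋆ be an F-bilinear map on S satisfying n(x⋆y) = λ n(x) n(y) for all x,y ∈ S, where λ ∈ F^×. Then ⋆ satisfies b_n(x⋆y, z) = b_n(x, y⋆z) for all x,y,z ∈ S if and only if x⋆(y⋆x) = λ n(x) y = (x⋆y)⋆x for all x,y ∈ S. -/
section Aux

variable {F : Type*} [Field F] {S : Type*} [AddCommGroup S] [Module F S]

private lemma polar_expand (n : QuadraticForm F S) (x y : S) :
    n (x + y) = n x + n y + QuadraticMap.polar n x y := by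
  rw [QuadraticMap.polar]; ring

private lemma key_lemma [FiniteDimensional F S] (hdim : Module.finrank F S = 8)
    (n : QuadraticForm F S)
    (hnd : ∀ x : S, (∀ y : S, QuadraticMap.polar n x y = 0) → x = 0)
    (f : S →ₗ[F] F) (h : ∀ y, n y * f y = 0) : ∀ y, f y = 0 := by
  have Q : ∀ y u : S, n y * f u + n u * f y
      + QuadraticMap.polar n y u * (f y + f u) = 0 := by
    intro y u
    have h1 := h (y + u)
    rw [polar_expand n y u, f.map_add] at h1
    linear_combination h1 - h y - h u
  have T : ∀ y v u : S, QuadraticMap.polar n y v * f u + QuadraticMap.polar n y u * f v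
      + QuadraticMap.polar n v u * f y = 0 := by
    intro y v u
    have h1 := Q (y + v) u
    rw [polar_expand n y v, f.map_add, QuadraticMap.polar_add_left] at h1
    linear_combination h1 - Q y u - Q v u
  intro y
  by_contra hy
  -- find a nonzero u with f u = 0 and polar n y u = 0
  have hninj : ¬ Function.Injective (f.prod (n.polarBilin y)) := by
    intro hinj
    have hle := LinearMap.finrank_le_finrank_of_injective hinj
    rw [hdim, Module.finrank_prod, Module.finrank_self] at hle
    omega
  rw [← LinearMap.ker_eq_bot] at hninj
  obtain ⟨u, hu, hu0⟩ := Submodule.exists_mem_ne_zero_of_ne_bot hninj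
  rw [LinearMap.mem_ker, LinearMap.prod_apply, Prod.mk_eq_zero] at hu
  obtain ⟨hfu, hpu⟩ := hu
  simp only [Function.prod] at hfu hpu
  have hpu' : QuadraticMap.polar n y u = 0 := hpu
  apply hu0
  apply hnd
  intro v
  have ht := T y v u
  rw [hfu, hpu'] at ht
  have : QuadraticMap.polar n v u * f y = 0 := by linear_combination ht
  rw [QuadraticMap.polar_comm]
  rcases mul_eq_zero.mp this with h' | h'
  · exact h'
  · exact absurd h' hy

end Aux

/-- For a bilinear map `⋆` on an 8-dimensional quadratic space `(S, n)` with
nondegenerate polar form, satisfying `n (x ⋆ y) = λ * n x * n y`, the associativity condition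
`bₙ(x⋆y, z) = bₙ(x, y⋆z)` holds for all `x y z` iff
`x⋆(y⋆x) = λ n(x) • y = (x⋆y)⋆x` for all `x y`. -/
theorem statement0 (F : Type*) [Field F] (S : Type*) [AddCommGroup S] [Module F S]
    [FiniteDimensional F S] (hdim : Module.finrank F S = 8)
    (n : QuadraticForm F S)
    (hnd : ∀ x : S, (∀ y : S, QuadraticMap.polar n x y = 0) → x = 0)
    (star : S →ₗ[F] S →ₗ[F] S) (lam : F) (hlam : lam ≠ 0)
    (hmul : ∀ x y : S, n (star x y) = lam * n x * n y) :
    (∀ x y z : S,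
        QuadraticMap.polar n (star x y) z = QuadraticMap.polar n x (star y z)) ↔
    (∀ x y : S, star x (star y x) = (lam * n x) • y ∧
        star (star x y) x = (lam * n x) • y) := by
  have cancelL : ∀ a u v : S, QuadraticMap.polar n (star a u) (star a v)
      = lam * n a * QuadraticMap.polar n u v := by
    intro a u v
    have h0 : n (star a (u + v)) = lam * n a * n (u + v) := hmul _ _
    rw [(star a).map_add, polar_expand n (star a u) (star a v),
      polar_expand n u v, hmul, hmul] at h0
    linear_combination h0
  have cancelR : ∀ a u v : S, QuadraticMap.polar n (star u a) (star v a)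
      = lam * n a * QuadraticMap.polar n u v := by
    intro a u v
    have h0 : n (star (u + v) a) = lam * n (u + v) * n a := hmul _ _
    rw [star.map_add, LinearMap.add_apply, polar_expand n (star u a) (star v a),
      polar_expand n u v, hmul, hmul] at h0
    linear_combination h0
  constructor
  · intro hassoc x y
    constructor
    · have hz : ∀ z : S,
          QuadraticMap.polar n (star x (star y x) - (lam * n x) • y) z = 0 := by
        intro z
        rw [QuadraticMap.polar_sub_left, QuadraticMap.polar_smul_left]
        have h1 : QuadraticMap.polar n (star x (star y x)) z
            = lam * n x * QuadraticMap.polar n y z := by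
          rw [QuadraticMap.polar_comm, ← hassoc z x (star y x), cancelR,
            QuadraticMap.polar_comm n z y]
        rw [h1, smul_eq_mul]
        ring
      have := hnd _ hz
      rwa [sub_eq_zero] at this
    · have hz : ∀ z : S,
          QuadraticMap.polar n (star (star x y) x - (lam * n x) • y) z = 0 := by
        intro z
        rw [QuadraticMap.polar_sub_left, QuadraticMap.polar_smul_left]
        have h1 : QuadraticMap.polar n (star (star x y) x) z
            = lam * n x * QuadraticMap.polar n y z := by
          rw [hassoc (star x y) x z, cancelL]
        rw [h1, smul_eq_mul]
        ring
      have := hnd _ hz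
      rwa [sub_eq_zero] at this
  · intro hAB x y z
    set g1 : S →ₗ[F] F := ((n.polarBilin).flip z) ∘ₗ (star x) with hg1
    set g2 : S →ₗ[F] F := (n.polarBilin x) ∘ₗ (star.flip z) with hg2
    have hg1a : ∀ w : S, g1 w = QuadraticMap.polar n (star x w) z := fun w => rfl
    have hg2a : ∀ w : S, g2 w = QuadraticMap.polar n x (star w z) := fun w => rfl
    have hkey : ∀ w : S, n w * ((lam • (g1 - g2)) w) = 0 := by
      intro w
      have hA := (hAB w x).1
      have e1 : lam * n w * QuadraticMap.polar n x (star w z)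
          = QuadraticMap.polar n (star w (star x w)) (star w z) := by
        rw [hA, QuadraticMap.polar_smul_left, smul_eq_mul]
      have e2 : QuadraticMap.polar n (star w (star x w)) (star w z)
          = lam * n w * QuadraticMap.polar n (star x w) z := cancelL w _ _
      simp only [LinearMap.smul_apply, LinearMap.sub_apply, hg1a, hg2a, smul_eq_mul]
      linear_combination -e1 - e2
    have hz := key_lemma hdim n hnd (lam • (g1 - g2)) hkey y
    simp only [LinearMap.smul_apply, LinearMap.sub_apply, hg1a, hg2a, smul_eq_mul] at hz
    rcases mul_eq_zero.mp hz with h | h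
    · exact absurd h hlam
    · exact sub_eq_zero.mp h
end

section
/- Suppose there exists u ∈ S with n(u) = 1. Then: (1) the product x⋄y := λ_⋆^{−2} · u⋆((x⋆u)⋆(y⋆u)) is a normalized symmetric composition on (S,n), and the map λ_⋆^{−1} r_u is a similarity of (S,n) satisfying λ_⋆^{−1} r_u(x⋄y) = (λ_⋆^{−1} r_u(x)) ⋆ (λ_⋆^{−1} r_u(y)) for all x,y ∈ S; (2) if ⋄ and ⋄' are normalized symmetric compositions on (S,n) and there are similarities g, g' of (S,n) with g(x⋄y) = g(x)⋆g(y) and g'(x⋄'y) = g'(x)⋆g'(y) for all x,y, then there is an isometry h of (S,n) with h(x⋄y) = h(x)⋄'h(y) for all x,y ∈ S. -/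
/-- Every symmetric composition on `(S,n)` (with `n` representing `1`) is similar
to a normalized one, unique up to isomorphism. -/
theorem statement1 (F : Type*) [Field F] (S : Type*) [AddCommGroup S] [Module F S]
    [FiniteDimensional F S] (hdim : Module.finrank F S = 8)
    (n : QuadraticForm F S)
    (hnd : ∀ x : S, (∀ y : S, QuadraticMap.polar n x y = 0) → x = 0)
    (star : S →ₗ[F] S →ₗ[F] S) (lam : F) (hlam : lam ≠ 0)
    (hmul : ∀ x y : S, n (star x y) = lam * n x * n y)
    (hassoc : ∀ x y z : S,
        QuadraticMap.polar n (star x y) z = QuadraticMap.polar n x (star y z))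
    (u : S) (hu : n u = 1) :
    -- (1) `x ⋄ y := λ⁻² • (u ⋆ ((x ⋆ u) ⋆ (y ⋆ u)))` is a normalized symmetric composition,
    ((∀ x y : S,
        n ((lam ^ 2)⁻¹ • star u (star (star x u) (star y u))) = n x * n y) ∧
      (∀ x y z : S,
        QuadraticMap.polar n ((lam ^ 2)⁻¹ • star u (star (star x u) (star y u))) z =
          QuadraticMap.polar n x ((lam ^ 2)⁻¹ • star u (star (star y u) (star z u)))) ∧
      -- and `λ⁻¹ • r_u` is a similarity `⋄ → ⋆`:
      Function.Bijective (fun x : S => lam⁻¹ • star x u) ∧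
      (∃ μ : F, μ ≠ 0 ∧ ∀ x : S, n (lam⁻¹ • star x u) = μ * n x) ∧
      (∀ x y : S,
        lam⁻¹ • star ((lam ^ 2)⁻¹ • star u (star (star x u) (star y u))) u =
          star (lam⁻¹ • star x u) (lam⁻¹ • star y u))) ∧
    -- (2) two normalized symmetric compositions similar to `⋆` are isomorphic:
    (∀ d d' : S →ₗ[F] S →ₗ[F] S,
      (∀ x y : S, n (d x y) = n x * n y) →
      (∀ x y z : S,
        QuadraticMap.polar n (d x y) z = QuadraticMap.polar n x (d y z)) →
      (∀ x y : S, n (d' x y) = n x * n y) →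
      (∀ x y z : S,
        QuadraticMap.polar n (d' x y) z = QuadraticMap.polar n x (d' y z)) →
      ∀ g g' : S ≃ₗ[F] S,
        (∃ μ : F, μ ≠ 0 ∧ ∀ x : S, n (g x) = μ * n x) →
        (∃ μ' : F, μ' ≠ 0 ∧ ∀ x : S, n (g' x) = μ' * n x) →
        (∀ x y : S, g (d x y) = star (g x) (g y)) →
        (∀ x y : S, g' (d' x y) = star (g' x) (g' y)) →
        ∃ h : S ≃ₗ[F] S, (∀ x : S, n (h x) = n x) ∧
          ∀ x y : S, h (d x y) = d' (h x) (h y)) := by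
  classical
  -- linearized multiplicativity: polar n (x⋆y) (x⋆z) = λ n(x) polar n y z
  have bmul1 : ∀ x y z : S, QuadraticMap.polar n (star x y) (star x z)
      = lam * n x * QuadraticMap.polar n y z := by
    intro x y z
    have h := hmul x (y + z)
    rw [map_add] at h
    unfold QuadraticMap.polar
    rw [hmul, hmul]
    linear_combination h
  have bmul2 : ∀ x y z : S, QuadraticMap.polar n (star x z) (star y z)
      = lam * n z * QuadraticMap.polar n x y := by
    intro x y z
    have h := hmul (x + y) z
    rw [map_add, LinearMap.add_apply] at h
    unfold QuadraticMap.polar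
    rw [hmul, hmul]
    linear_combination h
  -- key identities
  have key1 : ∀ x y : S, star (star x y) x = (lam * n x) • y := by
    intro x y
    have hz : ∀ z : S,
        QuadraticMap.polar n (star (star x y) x - (lam * n x) • y) z = 0 := by
      intro z
      rw [QuadraticMap.polar_sub_left, QuadraticMap.polar_smul_left, hassoc, bmul1,
        smul_eq_mul]
      ring
    have := hnd _ hz
    exact sub_eq_zero.mp this
  have key2 : ∀ x y : S, star x (star y x) = (lam * n x) • y := by
    intro x y
    have hz : ∀ z : S,
        QuadraticMap.polar n (star x (star y x) - (lam * n x) • y) z = 0 := by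
      intro z
      rw [QuadraticMap.polar_sub_left, QuadraticMap.polar_smul_left,
        QuadraticMap.polar_comm n (star x (star y x)) z, ← hassoc z x (star y x),
        bmul2 z y x, QuadraticMap.polar_comm n z y, smul_eq_mul]
      ring
    have := hnd _ hz
    exact sub_eq_zero.mp this
  have lr : ∀ x : S, star u (star x u) = lam • x := by
    intro x
    rw [key2 u x, hu, mul_one]
  have rl : ∀ x : S, star (star u x) u = lam • x := by
    intro x
    rw [key1 u x, hu, mul_one]
  have nsim : ∀ x : S, n (lam⁻¹ • star x u) = lam⁻¹ * n x := by
    intro x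
    rw [QuadraticMap.map_smul, hmul, hu, smul_eq_mul]
    field_simp
  -- the similarity intertwines the products
  have rdiam : ∀ x y : S,
      lam⁻¹ • star ((lam ^ 2)⁻¹ • star u (star (star x u) (star y u))) u =
        star (lam⁻¹ • star x u) (lam⁻¹ • star y u) := by
    intro x y
    rw [LinearMap.map_smul₂, rl, map_smul, LinearMap.map_smul₂, smul_smul, smul_smul,
      smul_smul]
    congr 1
    rw [sq]
    field_simp
  have rpolar : ∀ a b : S, QuadraticMap.polar n (lam⁻¹ • star a u) (lam⁻¹ • star b u)
      = lam⁻¹ * QuadraticMap.polar n a b := by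
    intro a b
    have hadd : lam⁻¹ • star a u + lam⁻¹ • star b u = lam⁻¹ • star (a + b) u := by
      rw [map_add, LinearMap.add_apply, smul_add]
    unfold QuadraticMap.polar
    rw [hadd, nsim, nsim, nsim]
    ring
  refine ⟨⟨?_, ?_, ?_, ⟨lam⁻¹, inv_ne_zero hlam, nsim⟩, rdiam⟩, ?_⟩
  · -- normalized multiplicativity
    intro x y
    rw [QuadraticMap.map_smul, hmul, hmul, hmul, hmul, hu, smul_eq_mul]
    field_simp
  · -- polar associativity of the new product
    intro x y z
    have h1 := rpolar ((lam ^ 2)⁻¹ • star u (star (star x u) (star y u))) z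
    rw [rdiam x y] at h1
    have h2 := rpolar x ((lam ^ 2)⁻¹ • star u (star (star y u) (star z u)))
    rw [rdiam y z] at h2
    have h3 := hassoc (lam⁻¹ • star x u) (lam⁻¹ • star y u) (lam⁻¹ • star z u)
    have h4 : lam⁻¹ * QuadraticMap.polar n
          ((lam ^ 2)⁻¹ • star u (star (star x u) (star y u))) z
        = lam⁻¹ * QuadraticMap.polar n x
          ((lam ^ 2)⁻¹ • star u (star (star y u) (star z u))) := by
      rw [← h1, ← h2, h3]
    exact mul_left_cancel₀ (inv_ne_zero hlam) h4
  · -- bijectivity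
    apply Function.bijective_iff_has_inverse.mpr
    refine ⟨fun y => star u y, ?_, ?_⟩
    · intro x
      show star u (lam⁻¹ • star x u) = x
      rw [map_smul, lr, smul_smul, inv_mul_cancel₀ hlam, one_smul]
    · intro y
      show lam⁻¹ • star (star u y) u = y
      rw [rl, smul_smul, inv_mul_cancel₀ hlam, one_smul]
  · -- uniqueness up to isometry
    intro d d' hd hda hd' hda' g g' hg hg' hcomp hcomp'
    obtain ⟨μ, hμ, hgn⟩ := hg
    obtain ⟨μ', hμ', hgn'⟩ := hg'
    have hμeq : lam * μ = 1 := by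
      have h1 : n (g (d u u)) = μ := by rw [hgn, hd, hu]; ring
      have h2 : n (star (g u) (g u)) = μ * (lam * μ) := by
        rw [hmul, hgn, hu]; ring
      rw [hcomp, h2] at h1
      have h3 : μ * (lam * μ) = μ * 1 := by rw [mul_one]; exact h1
      exact mul_left_cancel₀ hμ h3
    have hμeq' : lam * μ' = 1 := by
      have h1 : n (g' (d' u u)) = μ' := by rw [hgn', hd', hu]; ring
      have h2 : n (star (g' u) (g' u)) = μ' * (lam * μ') := by
        rw [hmul, hgn', hu]; ring
      rw [hcomp', h2] at h1
      have h3 : μ' * (lam * μ') = μ' * 1 := by rw [mul_one]; exact h1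
      exact mul_left_cancel₀ hμ' h3
    have hμμ' : μ = μ' := by
      have h : lam * μ = lam * μ' := by rw [hμeq, hμeq']
      exact mul_left_cancel₀ hlam h
    refine ⟨g.trans g'.symm, ?_, ?_⟩
    · intro x
      have hx : g' ((g.trans g'.symm) x) = g x := by simp
      have h1 : μ' * n ((g.trans g'.symm) x) = μ * n x := by
        rw [← hgn' ((g.trans g'.symm) x), hx, hgn]
      have h2 : μ' * n ((g.trans g'.symm) x) = μ' * n x := by rw [h1, hμμ']
      exact mul_left_cancel₀ hμ' h2
    · intro x y
      have hx : g' ((g.trans g'.symm) x) = g x := by simp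
      have hy : g' ((g.trans g'.symm) y) = g y := by simp
      have hkey : g (d x y) = g' (d' ((g.trans g'.symm) x) ((g.trans g'.symm) y)) := by
        rw [hcomp, hcomp', hx, hy]
      show g'.symm (g (d x y)) = _
      rw [hkey, LinearEquiv.symm_apply_apply]
end

section
/- Let N be the quadratic form on S ⊕ S given by N(u,v) = n(u) + n(v), with polar form b_N. For every element c of the even Clifford subalgebra C_0(S,n) and all w, w' ∈ S ⊕ S, one has b_N(α_⋆(c)(w), w') = b_N(w, α_⋆(σ(c))(w')), where σ is the canonical involution (reversal) of C(S,n), i.e., the unique anti-automorphism fixing every x ∈ S. -/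
/-- For `N(u,v) = n(u) + n(v)` on `S ⊕ S`, the isomorphism `α_⋆` intertwines the
canonical involution (reversal) `σ` of `C_0(S,n)` with the adjoint involution of `b_N`:
`b_N(α_⋆(c) w, w') = b_N(w, α_⋆(σ c) w')` for all `c ∈ C_0(S,n)` and `w, w' ∈ S ⊕ S`. -/
theorem statement3 (F : Type*) [Field F] (S : Type*) [AddCommGroup S] [Module F S]
    [FiniteDimensional F S] (hdim : Module.finrank F S = 8)
    (n : QuadraticForm F S)
    (hnd : ∀ x : S, (∀ y : S, QuadraticMap.polar n x y = 0) → x = 0)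
    (star : S →ₗ[F] S →ₗ[F] S) (lam : F) (hlam : lam ≠ 0)
    (hmul : ∀ x y : S, n (star x y) = lam * n x * n y)
    (hassoc : ∀ x y z : S,
        QuadraticMap.polar n (star x y) z = QuadraticMap.polar n x (star y z))
    (α : CliffordAlgebra n →ₐ[F] Module.End F (S × S))
    (hα : ∀ (x : S) (w : S × S),
        α (CliffordAlgebra.ι n x) w = (lam⁻¹ • star w.2 x, star x w.1)) :
    ∀ c ∈ CliffordAlgebra.even n, ∀ w w' : S × S,
      QuadraticMap.polar (fun z : S × S => n z.1 + n z.2) (α c w) w' =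
        QuadraticMap.polar (fun z : S × S => n z.1 + n z.2) w
          (α (CliffordAlgebra.reverse c) w') := by
  -- The polar form of N splits as a sum
  have hpolar : ∀ a b : S × S,
      QuadraticMap.polar (fun z : S × S => n z.1 + n z.2) a b =
        QuadraticMap.polar n a.1 b.1 + QuadraticMap.polar n a.2 b.2 := by
    intro a b
    simp only [QuadraticMap.polar, Prod.fst_add, Prod.snd_add]
    ring
  set B : S × S → S × S → F := fun a b =>
    QuadraticMap.polar n a.1 b.1 + QuadraticMap.polar n a.2 b.2 with hBdef
  set C : S × S → S × S → F := fun a b =>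
    lam * QuadraticMap.polar n a.1 b.1 + lam⁻¹ * QuadraticMap.polar n a.2 b.2 with hCdef
  -- key step lemmas
  have step1 : ∀ (x : S) (a b : S × S),
      B (α (CliffordAlgebra.ι n x) a) b = C a (α (CliffordAlgebra.ι n x) b) := by
    intro x a b
    simp only [hBdef, hCdef, hα, QuadraticMap.polar_smul_left, smul_eq_mul]
    have h1 : QuadraticMap.polar n (star a.2 x) b.1
        = QuadraticMap.polar n a.2 (star x b.1) := hassoc _ _ _
    have h2 : QuadraticMap.polar n (star x a.1) b.2
        = QuadraticMap.polar n a.1 (star b.2 x) := by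
      rw [QuadraticMap.polar_comm, ← hassoc, QuadraticMap.polar_comm]
    rw [h1, h2]
    simp only [QuadraticMap.polar_smul_right, smul_eq_mul]
    field_simp
    ring
  have step2 : ∀ (x : S) (a b : S × S),
      C (α (CliffordAlgebra.ι n x) a) b = B a (α (CliffordAlgebra.ι n x) b) := by
    intro x a b
    simp only [hBdef, hCdef, hα, QuadraticMap.polar_smul_left, smul_eq_mul]
    have h1 : QuadraticMap.polar n (star a.2 x) b.1
        = QuadraticMap.polar n a.2 (star x b.1) := hassoc _ _ _
    have h2 : QuadraticMap.polar n (star x a.1) b.2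
        = QuadraticMap.polar n a.1 (star b.2 x) := by
      rw [QuadraticMap.polar_comm, ← hassoc, QuadraticMap.polar_comm]
    rw [h1, h2]
    simp only [QuadraticMap.polar_smul_right, smul_eq_mul]
    field_simp
    ring
  intro c hc
  have key : ∀ w w' : S × S, B (α c w) w' = B w (α (CliffordAlgebra.reverse c) w') := by
    induction c, hc using CliffordAlgebra.even_induction with
    | algebraMap r =>
      intro w w'
      simp only [AlgHom.commutes, Module.algebraMap_end_apply, CliffordAlgebra.reverse.commutes,
        hBdef, Prod.smul_fst, Prod.smul_snd, QuadraticMap.polar_smul_left,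
        QuadraticMap.polar_smul_right, smul_eq_mul]
    | add x y hx hy ihx ihy =>
      intro w w'
      have h1 := ihx w w'
      have h2 := ihy w w'
      simp only [hBdef, map_add, LinearMap.add_apply, Prod.fst_add, Prod.snd_add,
        QuadraticMap.polar_add_left, QuadraticMap.polar_add_right] at h1 h2 ⊢
      linear_combination h1 + h2
    | ι_mul_ι_mul m₁ m₂ x hx ih =>
      intro w w'
      rw [map_mul, map_mul, Module.End.mul_apply, Module.End.mul_apply,
        step1 m₁, step2 m₂, ih, CliffordAlgebra.reverse.map_mul,
        CliffordAlgebra.reverse.map_mul, CliffordAlgebra.reverse_ι,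
        CliffordAlgebra.reverse_ι, map_mul, map_mul, Module.End.mul_apply,
        Module.End.mul_apply]
  intro w w'
  rw [hpolar, hpolar]
  exact key w w'
end

section
/- Let f, g, h be similarities of (S,n) and λ ∈ F^× such that λ f(x⋆y) = g(x)⋆h(y) for all x,y ∈ S. Then λ^{−1}μ(h) · g(x⋆y) = h(x)⋆f(y) for all x,y ∈ S, and λ^{−1}μ(g) · h(x⋆y) = f(x)⋆g(y) for all x,y ∈ S, and λ² μ(f) = μ(g) μ(h). -/
/-- If `λ f(x⋆y) = g(x)⋆h(y)` for similarities `f, g, h`, then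
`λ⁻¹μ(h) g(x⋆y) = h(x)⋆f(y)`, `λ⁻¹μ(g) h(x⋆y) = f(x)⋆g(y)`, and `λ²μ(f) = μ(g)μ(h)`. -/
theorem statement4 (F : Type*) [Field F] (S : Type*) [AddCommGroup S] [Module F S]
    [FiniteDimensional F S] (hdim : Module.finrank F S = 8)
    (n : QuadraticForm F S)
    (hnd : ∀ x : S, (∀ y : S, QuadraticMap.polar n x y = 0) → x = 0)
    (star : S →ₗ[F] S →ₗ[F] S) (lam : F) (hlam : lam ≠ 0)
    (hmul : ∀ x y : S, n (star x y) = lam * n x * n y)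
    (hassoc : ∀ x y z : S,
        QuadraticMap.polar n (star x y) z = QuadraticMap.polar n x (star y z))
    (f g h : S ≃ₗ[F] S) (μf μg μh : F)
    (hμf : μf ≠ 0) (hμg : μg ≠ 0) (hμh : μh ≠ 0)
    (hf : ∀ x : S, n (f x) = μf * n x)
    (hg : ∀ x : S, n (g x) = μg * n x)
    (hh : ∀ x : S, n (h x) = μh * n x)
    (l : F) (hl : l ≠ 0)
    (hrel : ∀ x y : S, l • f (star x y) = star (g x) (h y)) :
    (∀ x y : S, (l⁻¹ * μh) • g (star x y) = star (h x) (f y)) ∧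
    (∀ x y : S, (l⁻¹ * μg) • h (star x y) = star (f x) (g y)) ∧
    l ^ 2 * μf = μg * μh := by
  -- there exists an anisotropic vector
  obtain ⟨e, he⟩ : ∃ e : S, n e ≠ 0 := by
    by_contra hc
    push_neg at hc
    have hsub : ∀ x : S, x = 0 := by
      intro x
      exact hnd x fun y => by simp [QuadraticMap.polar, hc]
    have : Subsingleton S := ⟨fun a b => by rw [hsub a, hsub b]⟩
    have := Module.finrank_zero_of_subsingleton (R := F) (M := S)
    omega
  -- multiplier identity
  have h3 : l ^ 2 * μf = μg * μh := by
    have A : n (l • f (star e e)) = n (star (g e) (h e)) := by rw [hrel]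
    rw [QuadraticMap.map_smul, hf, hmul, hmul, hg, hh] at A
    simp only [smul_eq_mul] at A
    have hne : lam * (n e * n e) ≠ 0 := mul_ne_zero hlam (mul_ne_zero he he)
    apply mul_right_cancel₀ hne
    linear_combination A
  -- similarities scale the polar form
  have hpf : ∀ x y : S, QuadraticMap.polar n (f x) (f y) = μf * QuadraticMap.polar n x y := by
    intro x y
    simp only [QuadraticMap.polar, ← map_add, hf]; ring
  have hpg : ∀ x y : S, QuadraticMap.polar n (g x) (g y) = μg * QuadraticMap.polar n x y := by
    intro x y
    simp only [QuadraticMap.polar, ← map_add, hg]; ring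
  have hph : ∀ x y : S, QuadraticMap.polar n (h x) (h y) = μh * QuadraticMap.polar n x y := by
    intro x y
    simp only [QuadraticMap.polar, ← map_add, hh]; ring
  -- cyclic identity
  have hcyc : ∀ x y z : S,
      QuadraticMap.polar n (star x y) z = QuadraticMap.polar n y (star z x) := by
    intro x y z
    rw [hassoc x y z, QuadraticMap.polar_comm n, hassoc y z x]
  have hc1 : l⁻¹ * (μh * μg) = l * μf := by
    field_simp
    linear_combination -h3
  -- first claim
  have claim1 : ∀ x y : S, (l⁻¹ * μh) • g (star x y) = star (h x) (f y) := by
    intro x y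
    rw [← sub_eq_zero]
    apply hnd
    intro z
    have hz : z = g (g.symm z) := (g.apply_symm_apply z).symm
    set w := g.symm z with hw
    rw [hz, QuadraticMap.polar_sub_left, QuadraticMap.polar_smul_left, hpg]
    have t2 : QuadraticMap.polar n (star (h x) (f y)) (g w)
        = l * μf * QuadraticMap.polar n (star x y) w := by
      rw [hcyc, ← hrel, QuadraticMap.polar_smul_right, hpf,
        QuadraticMap.polar_comm n, hassoc, QuadraticMap.polar_comm n]
      simp only [smul_eq_mul]
      ring
    rw [t2]
    simp only [smul_eq_mul]
    linear_combination (QuadraticMap.polar (⇑n) ((star x) y) w) * hc1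
  refine ⟨claim1, ?_, h3⟩
  intro x y
  rw [← sub_eq_zero]
  apply hnd
  intro z
  have hz : z = h (h.symm z) := (h.apply_symm_apply z).symm
  set w := h.symm z with hw
  rw [hz, QuadraticMap.polar_sub_left, QuadraticMap.polar_smul_left, hph]
  have t2 : QuadraticMap.polar n (star (f x) (g y)) (h w)
      = l * μf * QuadraticMap.polar n (star x y) w := by
    rw [hcyc, ← claim1, QuadraticMap.polar_smul_right, hpg,
      QuadraticMap.polar_comm n, hassoc, QuadraticMap.polar_comm n]
    simp only [smul_eq_mul]
    linear_combination (QuadraticMap.polar (⇑n) ((star x) y) w) * hc1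
  rw [t2]
  have hc2 : l⁻¹ * μg * μh = l * μf := by rw [← hc1]; ring
  simp only [smul_eq_mul]
  linear_combination (QuadraticMap.polar (⇑n) ((star x) y) w) * hc2
end

section
/- Let f, g, h be similarities of (S,n) and λ ∈ F^× such that λ f(x⋆y) = h(y)⋆g(x) for all x,y ∈ S. Then there exist μ, ν ∈ F^× such that μ g(x⋆y) = f(y)⋆h(x) for all x,y ∈ S and ν h(x⋆y) = g(y)⋆f(x) for all x,y ∈ S. -/
/-- If `λ f(x⋆y) = h(y)⋆g(x)` for similarities `f, g, h`, then there exist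
`μ, ν ∈ F^×` with `μ g(x⋆y) = f(y)⋆h(x)` and `ν h(x⋆y) = g(y)⋆f(x)` for all `x, y`. -/
theorem statement5 (F : Type*) [Field F] (S : Type*) [AddCommGroup S] [Module F S]
    [FiniteDimensional F S] (hdim : Module.finrank F S = 8)
    (n : QuadraticForm F S)
    (hnd : ∀ x : S, (∀ y : S, QuadraticMap.polar n x y = 0) → x = 0)
    (star : S →ₗ[F] S →ₗ[F] S) (lam : F) (hlam : lam ≠ 0)
    (hmul : ∀ x y : S, n (star x y) = lam * n x * n y)
    (hassoc : ∀ x y z : S,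
        QuadraticMap.polar n (star x y) z = QuadraticMap.polar n x (star y z))
    (f g h : S ≃ₗ[F] S) (μf μg μh : F)
    (hμf : μf ≠ 0) (hμg : μg ≠ 0) (hμh : μh ≠ 0)
    (hf : ∀ x : S, n (f x) = μf * n x)
    (hg : ∀ x : S, n (g x) = μg * n x)
    (hh : ∀ x : S, n (h x) = μh * n x)
    (l : F) (hl : l ≠ 0)
    (hrel : ∀ x y : S, l • f (star x y) = star (h y) (g x)) :
    ∃ μ ν : F, μ ≠ 0 ∧ ν ≠ 0 ∧
      (∀ x y : S, μ • g (star x y) = star (f y) (h x)) ∧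
      (∀ x y : S, ν • h (star x y) = star (g y) (f x)) := by
  classical
  have polar_map : ∀ (e : S ≃ₗ[F] S) (μ : F), (∀ x, n (e x) = μ * n x) →
      ∀ x y : S, QuadraticMap.polar n (e x) (e y) = μ * QuadraticMap.polar n x y := by
    intro e μ he x y
    simp only [QuadraticMap.polar, ← map_add, he]
    ring
  have cancel : ∀ u v : S, (∀ w : S, QuadraticMap.polar n u w = QuadraticMap.polar n v w) →
      u = v := by
    intro u v hw
    have h0 : u - v = 0 := hnd _ (fun y => by
      rw [QuadraticMap.polar_sub_left, hw, sub_self])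
    exact sub_eq_zero.mp h0
  have polar_symm : ∀ a b : S, QuadraticMap.polar n a b = QuadraticMap.polar n b a :=
    fun a b => QuadraticMap.polar_comm n a b
  set μ := l * μf / μg with hμdef
  have hμ0 : μ ≠ 0 := div_ne_zero (mul_ne_zero hl hμf) hμg
  have hμμg : μ * μg = l * μf := by rw [hμdef]; field_simp
  have key1 : ∀ x y : S, μ • g (star x y) = star (f y) (h x) := by
    intro x y
    apply cancel
    intro z
    obtain ⟨w, rfl⟩ : ∃ w, g w = z := ⟨g.symm z, g.apply_symm_apply z⟩
    have hstep : star (h x) (g w) = l • f (star w x) := (hrel w x).symm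
    calc QuadraticMap.polar n (μ • g (star x y)) (g w)
        = μ * QuadraticMap.polar n (g (star x y)) (g w) := by
          rw [QuadraticMap.polar_smul_left, smul_eq_mul]
      _ = μ * (μg * QuadraticMap.polar n (star x y) w) := by rw [polar_map g μg hg]
      _ = μ * μg * QuadraticMap.polar n x (star y w) := by rw [hassoc]; ring
      _ = l * μf * QuadraticMap.polar n (star y w) x := by rw [polar_symm, hμμg]
      _ = l * (μf * QuadraticMap.polar n y (star w x)) := by rw [← hassoc]; ring
      _ = l * QuadraticMap.polar n (f y) (f (star w x)) := by rw [polar_map f μf hf]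
      _ = QuadraticMap.polar n (f y) (l • f (star w x)) := by
          rw [QuadraticMap.polar_smul_right, smul_eq_mul]
      _ = QuadraticMap.polar n (star (f y) (h x)) (g w) := by rw [← hstep, ← hassoc]
  set ν := l * μf / μh with hνdef
  have hν0 : ν ≠ 0 := div_ne_zero (mul_ne_zero hl hμf) hμh
  have hνμh : ν * μh = μ * μg := by
    rw [hμμg, hνdef]; field_simp
  have key2 : ∀ x y : S, ν • h (star x y) = star (g y) (f x) := by
    intro x y
    apply cancel
    intro z
    obtain ⟨w, rfl⟩ : ∃ w, h w = z := ⟨h.symm z, h.apply_symm_apply z⟩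
    have hstep : star (f x) (h w) = μ • g (star w x) := (key1 w x).symm
    calc QuadraticMap.polar n (ν • h (star x y)) (h w)
        = ν * QuadraticMap.polar n (h (star x y)) (h w) := by
          rw [QuadraticMap.polar_smul_left, smul_eq_mul]
      _ = ν * (μh * QuadraticMap.polar n (star x y) w) := by rw [polar_map h μh hh]
      _ = ν * μh * QuadraticMap.polar n x (star y w) := by rw [hassoc]; ring
      _ = μ * μg * QuadraticMap.polar n (star y w) x := by rw [polar_symm, hνμh]
      _ = μ * (μg * QuadraticMap.polar n y (star w x)) := by rw [← hassoc]; ring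
      _ = μ * QuadraticMap.polar n (g y) (g (star w x)) := by rw [polar_map g μg hg]
      _ = QuadraticMap.polar n (g y) (μ • g (star w x)) := by
          rw [QuadraticMap.polar_smul_right, smul_eq_mul]
      _ = QuadraticMap.polar n (star (g y) (f x)) (h w) := by rw [← hstep, ← hassoc]
  exact ⟨μ, ν, hμ0, hν0, key1, key2⟩
end

section
/- Let f, g be similarities of (S,n). The bilinear map ⋄ defined by x⋄y = f(x)⋆g(y) is a symmetric composition on (S,n) if and only if f(x)⋆g(y) = μ(g) · g^{−1}(x⋆f(y)) for all x,y ∈ S. When these conditions hold, the multiplier of ⋄ is λ_⋄ = μ(f) μ(g) λ_⋆. -/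
/-- For similarities `f, g`, the map `x⋄y = f(x)⋆g(y)` is a symmetric
composition on `(S,n)` iff `f(x)⋆g(y) = μ(g) • g⁻¹(x⋆f(y))` for all `x, y`; in that case
the multiplier of `⋄` is `μ(f)μ(g)λ_⋆`. -/
theorem statement11 (F : Type*) [Field F] (S : Type*) [AddCommGroup S] [Module F S]
    [FiniteDimensional F S] (hdim : Module.finrank F S = 8)
    (n : QuadraticForm F S)
    (hnd : ∀ x : S, (∀ y : S, QuadraticMap.polar n x y = 0) → x = 0)
    (star : S →ₗ[F] S →ₗ[F] S) (lam : F) (hlam : lam ≠ 0)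
    (hmul : ∀ x y : S, n (star x y) = lam * n x * n y)
    (hassoc : ∀ x y z : S,
        QuadraticMap.polar n (star x y) z = QuadraticMap.polar n x (star y z))
    (f g : S ≃ₗ[F] S) (μf μg : F) (hμf : μf ≠ 0) (hμg : μg ≠ 0)
    (hf : ∀ x : S, n (f x) = μf * n x)
    (hg : ∀ x : S, n (g x) = μg * n x) :
    ((∃ lamd : F, lamd ≠ 0 ∧
        ∀ x y : S, n (star (f x) (g y)) = lamd * n x * n y) ∧
      (∀ x y z : S,
        QuadraticMap.polar n (star (f x) (g y)) z =
          QuadraticMap.polar n x (star (f y) (g z))) ↔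
      (∀ x y : S, star (f x) (g y) = μg • g.symm (star x (f y)))) ∧
    ((∀ x y : S, star (f x) (g y) = μg • g.symm (star x (f y))) →
      ∀ x y : S, n (star (f x) (g y)) = (μf * μg * lam) * n x * n y) := by
  -- polar scales under the similarity g
  have hpolar_g : ∀ a b : S,
      QuadraticMap.polar n (g a) (g b) = μg * QuadraticMap.polar n a b := by
    intro a b
    simp only [QuadraticMap.polar, ← map_add, hg]
    ring
  -- key: polar u (g z) = μg * polar (g.symm u) z
  have hkey : ∀ u z : S,
      QuadraticMap.polar n u (g z) = μg * QuadraticMap.polar n (g.symm u) z := by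
    intro u z
    have := hpolar_g (g.symm u) z
    rwa [g.apply_symm_apply] at this
  -- the multiplier computation, assuming the identity
  have hmult : (∀ x y : S, star (f x) (g y) = μg • g.symm (star x (f y))) →
      ∀ x y : S, n (star (f x) (g y)) = (μf * μg * lam) * n x * n y := by
    intro h x y
    rw [h x y, QuadraticMap.map_smul]
    have h1 : n (g (g.symm (star x (f y)))) = μg * n (g.symm (star x (f y))) :=
      hg _
    rw [g.apply_symm_apply] at h1
    have h2 : μg * μg * n (g.symm (star x (f y))) = μg * n (star x (f y)) := by
      rw [mul_assoc, ← h1]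
    rw [smul_eq_mul, h2, hmul, hf]
    ring
  refine ⟨⟨fun ⟨_, hd⟩ x y => ?_, fun h => ?_⟩, hmult⟩
  · -- forward direction: use nondegeneracy
    have hz : ∀ z : S,
        QuadraticMap.polar n (star (f x) (g y) - μg • g.symm (star x (f y))) z = 0 := by
      intro z
      rw [QuadraticMap.polar_sub_left, QuadraticMap.polar_smul_left, smul_eq_mul,
        hd x y z, ← hassoc, hkey, sub_self]
    have := hnd _ hz
    exact sub_eq_zero.mp this
  · refine ⟨⟨μf * μg * lam, mul_ne_zero (mul_ne_zero hμf hμg) hlam, hmult h⟩, fun x y z => ?_⟩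
    rw [h x y, QuadraticMap.polar_smul_left, smul_eq_mul, ← hkey, hassoc]
end

section
/- On the Zorn vector space 𝔷 = F × F³ × F³ × F, the para-Zorn product ∗, defined by (α,a,b,β) ∗ (γ,c,d,δ) = (βδ + a∙d, −βc − γa − b×d, −δb − αd + a×c, αγ + b∙c), is a normalized symmetric composition for the quadratic form n(α,a,b,β) = αβ − a∙b (in particular b_n is nondegenerate). Moreover the linear map π(α,a,b,β) = (α, p(a), p(b), β), where p(x₁,x₂,x₃) = (x₃,x₁,x₂), is an isometry of (𝔷,n) satisfying π(ξ ∗ η) = π(ξ) ∗ π(η) for all ξ,η ∈ 𝔷 and π³ = Id. -/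
/-- The standard dot product on `F³`. -/
def dot3 {F : Type*} [Field F] (a b : Fin 3 → F) : F :=
  a 0 * b 0 + a 1 * b 1 + a 2 * b 2

/-- The cross product on `F³`. -/
def cross3 {F : Type*} [Field F] (a b : Fin 3 → F) : Fin 3 → F :=
  ![a 1 * b 2 - a 2 * b 1, a 2 * b 0 - a 0 * b 2, a 0 * b 1 - a 1 * b 0]

/-- The Zorn vector space `𝔷 = F × F³ × F³ × F`. -/
abbrev ZornSpace (F : Type*) [Field F] : Type _ :=
  F × (Fin 3 → F) × (Fin 3 → F) × F

/-- The Zorn norm `n(α, a, b, β) = αβ − a∙b`. -/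
def zornN {F : Type*} [Field F] (ξ : ZornSpace F) : F :=
  ξ.1 * ξ.2.2.2 - dot3 ξ.2.1 ξ.2.2.1

/-- The para-Zorn product
`(α,a,b,β) ∗ (γ,c,d,δ) = (βδ + a∙d, −βc − γa − b×d, −δb − αd + a×c, αγ + b∙c)`. -/
def paraZornMul {F : Type*} [Field F] (ξ η : ZornSpace F) : ZornSpace F :=
  (ξ.2.2.2 * η.2.2.2 + dot3 ξ.2.1 η.2.2.1,
   -(ξ.2.2.2 • η.2.1) - η.1 • ξ.2.1 - cross3 ξ.2.2.1 η.2.2.1,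
   -(η.2.2.2 • ξ.2.2.1) - ξ.1 • η.2.2.1 + cross3 ξ.2.1 η.2.1,
   ξ.1 * η.1 + dot3 ξ.2.2.1 η.2.1)

/-- The cyclic permutation `p(x₁,x₂,x₃) = (x₃,x₁,x₂)` of coordinates of `F³`. -/
def perm3 {F : Type*} [Field F] (a : Fin 3 → F) : Fin 3 → F :=
  ![a 2, a 0, a 1]

/-- The map `π(α,a,b,β) = (α, p(a), p(b), β)`. -/
def zornPi {F : Type*} [Field F] (ξ : ZornSpace F) : ZornSpace F :=
  (ξ.1, perm3 ξ.2.1, perm3 ξ.2.2.1, ξ.2.2.2)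

section Aux
variable {F : Type*} [Field F]

@[simp] lemma cross3_zero (a b : Fin 3 → F) : cross3 a b 0 = a 1 * b 2 - a 2 * b 1 := rfl
@[simp] lemma cross3_one (a b : Fin 3 → F) : cross3 a b 1 = a 2 * b 0 - a 0 * b 2 := rfl
@[simp] lemma cross3_two (a b : Fin 3 → F) : cross3 a b 2 = a 0 * b 1 - a 1 * b 0 := rfl
@[simp] lemma perm3_zero (a : Fin 3 → F) : perm3 a 0 = a 2 := rfl
@[simp] lemma perm3_one (a : Fin 3 → F) : perm3 a 1 = a 0 := rfl
@[simp] lemma perm3_two (a : Fin 3 → F) : perm3 a 2 = a 1 := rfl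

omit [Field F] in
lemma fin3_ext {v w : Fin 3 → F} (h0 : v 0 = w 0) (h1 : v 1 = w 1) (h2 : v 2 = w 2) :
    v = w := by
  funext i
  fin_cases i <;> assumption

lemma zorn_ext {ξ η : ZornSpace F} (h1 : ξ.1 = η.1)
    (h20 : ξ.2.1 0 = η.2.1 0) (h21 : ξ.2.1 1 = η.2.1 1) (h22 : ξ.2.1 2 = η.2.1 2)
    (h30 : ξ.2.2.1 0 = η.2.2.1 0) (h31 : ξ.2.2.1 1 = η.2.2.1 1) (h32 : ξ.2.2.1 2 = η.2.2.1 2)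
    (h4 : ξ.2.2.2 = η.2.2.2) : ξ = η :=
  Prod.ext h1 (Prod.ext (fin3_ext h20 h21 h22) (Prod.ext (fin3_ext h30 h31 h32) h4))

lemma polar_zornN (ξ η : ZornSpace F) :
    QuadraticMap.polar (zornN (F := F)) ξ η =
      ξ.1 * η.2.2.2 + η.1 * ξ.2.2.2 - dot3 ξ.2.1 η.2.2.1 - dot3 η.2.1 ξ.2.2.1 := by
  simp only [QuadraticMap.polar, zornN, dot3, Prod.fst_add, Prod.snd_add, Pi.add_apply]
  ring

end Aux

/-- The para-Zorn product is a (bilinear) normalized symmetric composition for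
the Zorn norm `n` (whose polar form is nondegenerate), and `π` is an isometric automorphism
of the para-Zorn composition with `π³ = Id`. -/
theorem statement15 (F : Type*) [Field F] :
    -- bilinearity of the para-Zorn product
    (∀ ξ ξ' η : ZornSpace F,
        paraZornMul (ξ + ξ') η = paraZornMul ξ η + paraZornMul ξ' η) ∧
    (∀ (c : F) (ξ η : ZornSpace F), paraZornMul (c • ξ) η = c • paraZornMul ξ η) ∧
    (∀ ξ η η' : ZornSpace F,
        paraZornMul ξ (η + η') = paraZornMul ξ η + paraZornMul ξ η') ∧
    (∀ (c : F) (ξ η : ZornSpace F), paraZornMul ξ (c • η) = c • paraZornMul ξ η) ∧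
    -- the polar form of `n` is nondegenerate
    (∀ ξ : ZornSpace F,
        (∀ η : ZornSpace F, QuadraticMap.polar (zornN (F := F)) ξ η = 0) → ξ = 0) ∧
    -- normalized symmetric composition
    (∀ ξ η : ZornSpace F, zornN (paraZornMul ξ η) = zornN ξ * zornN η) ∧
    (∀ ξ η ζ : ZornSpace F,
        QuadraticMap.polar (zornN (F := F)) (paraZornMul ξ η) ζ =
          QuadraticMap.polar (zornN (F := F)) ξ (paraZornMul η ζ)) ∧
    -- `π` is a linear isometry, an automorphism of `∗`, and of order 3
    (∀ ξ η : ZornSpace F, zornPi (ξ + η) = zornPi ξ + zornPi η) ∧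
    (∀ (c : F) (ξ : ZornSpace F), zornPi (c • ξ) = c • zornPi ξ) ∧
    Function.Bijective (zornPi (F := F)) ∧
    (∀ ξ : ZornSpace F, zornN (zornPi ξ) = zornN ξ) ∧
    (∀ ξ η : ZornSpace F, zornPi (paraZornMul ξ η) = paraZornMul (zornPi ξ) (zornPi η)) ∧
    (∀ ξ : ZornSpace F, zornPi (zornPi (zornPi ξ)) = ξ) := by
  have hpi3 : ∀ ξ : ZornSpace F, zornPi (zornPi (zornPi ξ)) = ξ := by
    intro ξ
    apply zorn_ext <;> rfl
  refine ⟨?_, ?_, ?_, ?_, ?_, ?_, ?_, ?_, ?_, ?_, ?_, ?_, hpi3⟩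
  · intro ξ ξ' η
    apply zorn_ext <;>
      · simp only [paraZornMul, zornPi, dot3, cross3_zero, cross3_one, cross3_two,
          Prod.fst_add, Prod.snd_add, Pi.add_apply, Pi.sub_apply, Pi.neg_apply,
          Pi.smul_apply, smul_eq_mul]
        ring
  · intro k ξ η
    apply zorn_ext <;>
      · simp only [paraZornMul, zornPi, dot3, cross3_zero, cross3_one, cross3_two,
          Prod.smul_fst, Prod.smul_snd, Pi.add_apply, Pi.sub_apply, Pi.neg_apply,
          Pi.smul_apply, smul_eq_mul]
        ring
  · intro ξ η η'
    apply zorn_ext <;>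
      · simp only [paraZornMul, zornPi, dot3, cross3_zero, cross3_one, cross3_two,
          Prod.fst_add, Prod.snd_add, Pi.add_apply, Pi.sub_apply, Pi.neg_apply,
          Pi.smul_apply, smul_eq_mul]
        ring
  · intro k ξ η
    apply zorn_ext <;>
      · simp only [paraZornMul, zornPi, dot3, cross3_zero, cross3_one, cross3_two,
          Prod.smul_fst, Prod.smul_snd, Pi.add_apply, Pi.sub_apply, Pi.neg_apply,
          Pi.smul_apply, smul_eq_mul]
        ring
  · rintro ⟨α, a, b, β⟩ h
    have h1 := h (1, 0, 0, 0)
    have h2 := h (0, 0, 0, 1)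
    have ha : ∀ i : Fin 3, a i = 0 := by
      intro i
      have := h (0, 0, Pi.single i 1, 0)
      simp only [polar_zornN, dot3, Pi.zero_apply] at this
      fin_cases i <;> simpa [Pi.single_apply] using this
    have hb : ∀ i : Fin 3, b i = 0 := by
      intro i
      have := h (0, Pi.single i 1, 0, 0)
      simp only [polar_zornN, dot3, Pi.zero_apply] at this
      fin_cases i <;> simpa [Pi.single_apply] using this
    simp only [polar_zornN, dot3, Pi.zero_apply] at h1 h2
    apply zorn_ext
    · simpa using h2
    · simpa using ha 0
    · simpa using ha 1
    · simpa using ha 2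
    · simpa using hb 0
    · simpa using hb 1
    · simpa using hb 2
    · simpa using h1
  · intro ξ η
    simp only [zornN, paraZornMul, dot3, cross3_zero, cross3_one, cross3_two,
      Pi.add_apply, Pi.sub_apply, Pi.neg_apply, Pi.smul_apply, smul_eq_mul]
    ring
  · intro ξ η ζ
    simp only [polar_zornN, paraZornMul, dot3, cross3_zero, cross3_one, cross3_two,
      Pi.add_apply, Pi.sub_apply, Pi.neg_apply, Pi.smul_apply, smul_eq_mul]
    ring
  · intro ξ η
    apply zorn_ext <;> rfl
  · intro k ξ
    apply zorn_ext <;> rfl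
  · constructor
    · intro ξ η h
      have := congrArg (fun z => zornPi (zornPi z)) h
      simpa [hpi3] using this
    · intro ξ
      exact ⟨zornPi (zornPi ξ), hpi3 ξ⟩
  · intro ξ
    simp only [zornN, zornPi, dot3, perm3_zero, perm3_one, perm3_two]
    ring
  · intro ξ η
    apply zorn_ext <;>
      · simp only [paraZornMul, zornPi, dot3, cross3_zero, cross3_one, cross3_two,
          perm3_zero, perm3_one, perm3_two, Pi.add_apply, Pi.sub_apply, Pi.neg_apply,
          Pi.smul_apply, smul_eq_mul]
        try ring
end

section
/- Let F be a field with char F ≠ 3 containing a primitive cube root of unity ω (ω ≠ 1, ω³ = 1). Let A⁰ = {x ∈ M₃(F) : tr(x) = 0}, an 8-dimensional F-vector space, and define n : A⁰ → F by n(x) = −(1/3)·c₁(x), where c₁(x) is the coefficient of X in the characteristic polynomial det(X·1 − x), and define x ⋆ y = (1−ω)^{−1}(yx − ωxy) − (1/3)tr(xy)·1. Then x ⋆ y ∈ A⁰ for all x,y ∈ A⁰, the polar form of n is nondegenerate, ⋆ is a normalized symmetric composition on (A⁰,n) (i.e., n(x⋆y) = n(x)n(y) and b_n(x⋆y,z)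 = b_n(x,y⋆z) for all x,y,z ∈ A⁰), and the quadratic space (A⁰,n) is hyperbolic, i.e., there exists a 4-dimensional subspace of A⁰ on which n vanishes identically. -/
/-- The Okubo norm `n(x) = −(1/3)·c₁(x)`, where `c₁(x)` is the coefficient of `X` in the
characteristic polynomial of the 3×3 matrix `x`. -/
noncomputable def okuboN {F : Type*} [Field F] (x : Matrix (Fin 3) (Fin 3) F) : F :=
  -(3 : F)⁻¹ * (Matrix.charpoly x).coeff 1

/-- The Okubo product `x ⋆ y = (1−ω)⁻¹(yx − ωxy) − (1/3)tr(xy)·1`. -/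
noncomputable def okuboMul {F : Type*} [Field F] (ω : F)
    (x y : Matrix (Fin 3) (Fin 3) F) : Matrix (Fin 3) (Fin 3) F :=
  (1 - ω)⁻¹ • (y * x - ω • (x * y)) - ((3 : F)⁻¹ * Matrix.trace (x * y)) • 1

open Polynomial Matrix in
lemma okubo_charpoly_fin3 {F : Type*} [Field F] (x : Matrix (Fin 3) (Fin 3) F) :
    x.charpoly = X^3 - C (x 0 0 + x 1 1 + x 2 2) * X^2
      + C (x 0 0 * x 1 1 - x 0 1 * x 1 0 + x 0 0 * x 2 2 - x 0 2 * x 2 0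
           + x 1 1 * x 2 2 - x 1 2 * x 2 1) * X
      - C (Matrix.det x) := by
  rw [Matrix.charpoly, Matrix.det_fin_three, Matrix.det_fin_three]
  simp [Matrix.charmatrix_apply, Matrix.one_apply]
  ring

open Polynomial in
lemma okuboN_explicit {F : Type*} [Field F] (x : Matrix (Fin 3) (Fin 3) F) :
    okuboN x = -(3 : F)⁻¹ * (x 0 0 * x 1 1 - x 0 1 * x 1 0 + x 0 0 * x 2 2 - x 0 2 * x 2 0
           + x 1 1 * x 2 2 - x 1 2 * x 2 1) := by
  rw [okuboN, okubo_charpoly_fin3]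
  simp [add_mul, coeff_C_mul, coeff_X_pow, coeff_C]

lemma okubo_polar {F : Type*} [Field F] (a b : Matrix (Fin 3) (Fin 3) F) :
    QuadraticMap.polar (okuboN (F := F)) a b
      = (3 : F)⁻¹ * (Matrix.trace (a * b) - Matrix.trace a * Matrix.trace b) := by
  simp only [QuadraticMap.polar, okuboN_explicit, Matrix.trace_fin_three, Matrix.mul_apply,
    Fin.sum_univ_three, Matrix.add_apply]
  ring

lemma okuboN_add_smul {F : Type*} [Field F] (a b : Matrix (Fin 3) (Fin 3) F) (c : F) :
    okuboN (a + c • b)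
      = okuboN a + c^2 * okuboN b + c * QuadraticMap.polar (okuboN (F := F)) a b := by
  simp only [QuadraticMap.polar, okuboN_explicit, Matrix.add_apply, Matrix.smul_apply,
    smul_eq_mul]
  ring

lemma okuboMul_decomp {F : Type*} [Field F] {ω : F} (h3 : (3:F) ≠ 0) (hω1 : ω ≠ 1)
    (hω2 : ω^2 = -ω - 1) (x y : Matrix (Fin 3) (Fin 3) F) :
    okuboMul ω x y
      = (3:F)⁻¹ • (x*y + (2:F) • (y*x) - (Matrix.trace (x*y)) • 1)
        + ω • ((3:F)⁻¹ • (y*x - x*y)) := by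
  have h1 : (1 : F) - ω ≠ 0 := sub_ne_zero.mpr (Ne.symm hω1)
  have hinv : (1 - ω)⁻¹ = (3:F)⁻¹ * (2 + ω) := by
    apply inv_eq_of_mul_eq_one_right
    field_simp
    linear_combination -hω2
  rw [okuboMul, hinv]
  match_scalars <;> field_simp
  all_goals (ring_nf <;> simp only [hω2] <;> ring)

set_option maxHeartbeats 2000000 in
lemma okubo_keyB {F : Type*} [Field F] (h3 : (3:F) ≠ 0) (x y : Matrix (Fin 3) (Fin 3) F)
    (hx : x 2 2 = -x 0 0 - x 1 1) (hy : y 2 2 = -y 0 0 - y 1 1) :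
    okuboN ((3:F)⁻¹ • (x*y + (2:F) • (y*x) - (Matrix.trace (x*y)) • 1))
      - okuboN ((3:F)⁻¹ • (y*x - x*y)) = okuboN x * okuboN y := by
  simp [okuboN_explicit, Matrix.smul_apply, Matrix.sub_apply, Matrix.add_apply, Matrix.mul_apply,
    Fin.sum_univ_three, Matrix.trace_fin_three, Matrix.one_apply, smul_eq_mul]
  rw [hx, hy]
  field_simp
  ring

set_option maxHeartbeats 2000000 in
lemma okubo_keyA {F : Type*} [Field F] (h3 : (3:F) ≠ 0) (x y : Matrix (Fin 3) (Fin 3) F)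
    (hx : x 2 2 = -x 0 0 - x 1 1) (hy : y 2 2 = -y 0 0 - y 1 1) :
    QuadraticMap.polar (okuboN (F := F))
        ((3:F)⁻¹ • (x*y + (2:F) • (y*x) - (Matrix.trace (x*y)) • 1))
        ((3:F)⁻¹ • (y*x - x*y))
      = okuboN ((3:F)⁻¹ • (y*x - x*y)) := by
  simp [QuadraticMap.polar, okuboN_explicit, Matrix.smul_apply, Matrix.sub_apply,
    Matrix.add_apply, Matrix.mul_apply, Fin.sum_univ_three, Matrix.trace_fin_three,
    Matrix.one_apply, smul_eq_mul]
  rw [hx, hy]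
  field_simp
  ring

set_option maxHeartbeats 2000000 in
/-- Over a field of characteristic ≠ 3 containing a primitive cube root of
unity `ω`, the trace-zero matrices `A⁰ ⊂ M₃(F)` form an 8-dimensional space on which the
Okubo product and norm yield a normalized symmetric composition whose underlying quadratic
space is hyperbolic. -/
theorem statement17 (F : Type*) [Field F] (h3 : (3 : F) ≠ 0)
    (ω : F) (hω1 : ω ≠ 1) (hω3 : ω ^ 3 = 1) :
    -- `A⁰` is 8-dimensional
    Module.finrank F ↥(LinearMap.ker (Matrix.traceLinearMap (Fin 3) F F)) = 8 ∧
    -- `⋆` preserves `A⁰`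
    (∀ x y : Matrix (Fin 3) (Fin 3) F, Matrix.trace x = 0 → Matrix.trace y = 0 →
      Matrix.trace (okuboMul ω x y) = 0) ∧
    -- the polar form of `n` is nondegenerate on `A⁰`
    (∀ x : Matrix (Fin 3) (Fin 3) F, Matrix.trace x = 0 →
      (∀ y : Matrix (Fin 3) (Fin 3) F, Matrix.trace y = 0 →
        QuadraticMap.polar (okuboN (F := F)) x y = 0) → x = 0) ∧
    -- `⋆` is a normalized symmetric composition on `(A⁰, n)`
    (∀ x y : Matrix (Fin 3) (Fin 3) F, Matrix.trace x = 0 → Matrix.trace y = 0 →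
      okuboN (okuboMul ω x y) = okuboN x * okuboN y) ∧
    (∀ x y z : Matrix (Fin 3) (Fin 3) F,
      Matrix.trace x = 0 → Matrix.trace y = 0 → Matrix.trace z = 0 →
      QuadraticMap.polar (okuboN (F := F)) (okuboMul ω x y) z =
        QuadraticMap.polar (okuboN (F := F)) x (okuboMul ω y z)) ∧
    -- `(A⁰, n)` is hyperbolic: `n` vanishes on a 4-dimensional subspace of `A⁰`
    (∃ W : Submodule F (Matrix (Fin 3) (Fin 3) F),
      (∀ w ∈ W, Matrix.trace w = 0) ∧ Module.finrank F ↥W = 4 ∧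
      ∀ w ∈ W, okuboN w = 0) := by
  have hω2 : ω^2 = -ω - 1 := by
    have hfac : (ω - 1) * (ω^2 + ω + 1) = 0 := by linear_combination hω3
    rcases mul_eq_zero.1 hfac with h | h
    · exact absurd (sub_eq_zero.1 h) hω1
    · linear_combination h
  have h1ω : (1 : F) - ω ≠ 0 := sub_ne_zero.mpr (Ne.symm hω1)
  -- trace of the product is always zero
  have htr : ∀ a b : Matrix (Fin 3) (Fin 3) F, Matrix.trace (okuboMul ω a b) = 0 := by
    intro a b
    simp [okuboMul, Matrix.trace_fin_three, Matrix.mul_apply, Fin.sum_univ_three,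
      Matrix.one_apply]
    field_simp
    ring
  refine ⟨?_, fun x y _ _ => htr x y, ?_, ?_, ?_, ?_⟩
  · -- dimension 8
    have hr : LinearMap.range (Matrix.traceLinearMap (Fin 3) F F) = ⊤ := by
      rw [LinearMap.range_eq_top]
      intro c
      exact ⟨Matrix.diagonal ![c, 0, 0], by simp [Matrix.trace_diagonal, Fin.sum_univ_three, Matrix.vecHead, Matrix.vecTail]⟩
    have hrn := LinearMap.finrank_range_add_finrank_ker (Matrix.traceLinearMap (Fin 3) F F)
    rw [hr] at hrn
    simp [Module.finrank_matrix] at hrn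
    omega
  · -- nondegeneracy
    intro x hx hpol
    have key : ∀ y : Matrix (Fin 3) (Fin 3) F, Matrix.trace y = 0 →
        Matrix.trace (x * y) = 0 := by
      intro y hy
      have h := hpol y hy
      rw [okubo_polar, hy, mul_zero, sub_zero] at h
      exact (mul_eq_zero.1 h).resolve_left (inv_ne_zero h3)
    have hx' : x 0 0 + x 1 1 + x 2 2 = 0 := by simpa [Matrix.trace_fin_three] using hx
    have e01 : x 0 1 = 0 := by
      simpa [Matrix.trace_fin_three, Matrix.mul_apply, Fin.sum_univ_three, Matrix.vecHead, Matrix.vecTail] using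
        key !![0,0,0;1,0,0;0,0,0] (by simp [Matrix.trace_fin_three, Matrix.vecHead, Matrix.vecTail])
    have e02 : x 0 2 = 0 := by
      simpa [Matrix.trace_fin_three, Matrix.mul_apply, Fin.sum_univ_three, Matrix.vecHead, Matrix.vecTail] using
        key !![0,0,0;0,0,0;1,0,0] (by simp [Matrix.trace_fin_three, Matrix.vecHead, Matrix.vecTail])
    have e10 : x 1 0 = 0 := by
      simpa [Matrix.trace_fin_three, Matrix.mul_apply, Fin.sum_univ_three, Matrix.vecHead, Matrix.vecTail] using
        key !![0,1,0;0,0,0;0,0,0] (by simp [Matrix.trace_fin_three, Matrix.vecHead, Matrix.vecTail])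
    have e12 : x 1 2 = 0 := by
      simpa [Matrix.trace_fin_three, Matrix.mul_apply, Fin.sum_univ_three, Matrix.vecHead, Matrix.vecTail] using
        key !![0,0,0;0,0,0;0,1,0] (by simp [Matrix.trace_fin_three, Matrix.vecHead, Matrix.vecTail])
    have e20 : x 2 0 = 0 := by
      simpa [Matrix.trace_fin_three, Matrix.mul_apply, Fin.sum_univ_three, Matrix.vecHead, Matrix.vecTail] using
        key !![0,0,1;0,0,0;0,0,0] (by simp [Matrix.trace_fin_three, Matrix.vecHead, Matrix.vecTail])
    have e21 : x 2 1 = 0 := by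
      simpa [Matrix.trace_fin_three, Matrix.mul_apply, Fin.sum_univ_three, Matrix.vecHead, Matrix.vecTail] using
        key !![0,0,0;0,0,1;0,0,0] (by simp [Matrix.trace_fin_three, Matrix.vecHead, Matrix.vecTail])
    have d1 : x 0 0 - x 1 1 = 0 := by
      have := key !![1,0,0;0,-1,0;0,0,0] (by simp [Matrix.trace_fin_three, Matrix.vecHead, Matrix.vecTail])
      simp [Matrix.trace_fin_three, Matrix.mul_apply, Fin.sum_univ_three, Matrix.vecHead, Matrix.vecTail] at this
      linear_combination this
    have d2 : x 1 1 - x 2 2 = 0 := by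
      have := key !![0,0,0;0,1,0;0,0,-1] (by simp [Matrix.trace_fin_three, Matrix.vecHead, Matrix.vecTail])
      simp [Matrix.trace_fin_three, Matrix.mul_apply, Fin.sum_univ_three, Matrix.vecHead, Matrix.vecTail] at this
      linear_combination this
    have e00 : x 0 0 = 0 := by
      have h : (3:F) * x 0 0 = 0 := by linear_combination (2:F) * d1 + d2 + hx'
      exact (mul_eq_zero.1 h).resolve_left h3
    have e11 : x 1 1 = 0 := by linear_combination e00 - d1
    have e22 : x 2 2 = 0 := by linear_combination e11 - d2
    ext i j
    fin_cases i <;> fin_cases j <;> simp_all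
  · -- multiplicativity
    intro x y hx hy
    have hx22 : x 2 2 = -x 0 0 - x 1 1 := by
      have := hx; simp [Matrix.trace_fin_three] at this; linear_combination this
    have hy22 : y 2 2 = -y 0 0 - y 1 1 := by
      have := hy; simp [Matrix.trace_fin_three] at this; linear_combination this
    rw [okuboMul_decomp h3 hω1 hω2, okuboN_add_smul, okubo_keyA h3 x y hx22 hy22, hω2]
    linear_combination okubo_keyB h3 x y hx22 hy22
  · -- associativity of the polar form
    intro x y z hx hy hz
    have hx22 : x 2 2 = -x 0 0 - x 1 1 := by
      have := hx; simp [Matrix.trace_fin_three] at this; linear_combination this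
    have hz22 : z 2 2 = -z 0 0 - z 1 1 := by
      have := hz; simp [Matrix.trace_fin_three] at this; linear_combination this
    have key : Matrix.trace ((okuboMul ω x y) * z) = Matrix.trace (x * (okuboMul ω y z)) := by
      simp [okuboMul, Matrix.trace_fin_three, Matrix.mul_apply, Fin.sum_univ_three,
        Matrix.one_apply]
      rw [hx22, hz22]
      ring
    rw [okubo_polar, okubo_polar, key, htr x y, htr y z, hx, hz]
  · -- hyperbolic subspace
    have h1 : (1:F) + ω + ω^2 = 0 := by linear_combination hω2
    set v : Fin 4 → Matrix (Fin 3) (Fin 3) F :=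
      ![!![1,0,0;0,ω,0;0,0,ω^2], !![0,1,0;0,0,0;0,0,0],
        !![0,0,1;0,0,0;0,0,0], !![0,0,0;0,0,1;0,0,0]] with hv
    refine ⟨Submodule.span F (Set.range v), ?_, ?_, ?_⟩
    · intro w hw
      obtain ⟨c, rfl⟩ := (Submodule.mem_span_range_iff_exists_fun _).1 hw
      simp [hv, Fin.sum_univ_four, Matrix.trace_fin_three, Matrix.vecHead, Matrix.vecTail,
        -mul_eq_zero, -neg_eq_zero, -neg_mul, -inv_eq_zero]
      linear_combination (c 0) * h1
    · have hli : LinearIndependent F v := by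
        rw [Fintype.linearIndependent_iff]
        intro g hg
        have h := fun i j => congrFun (congrFun hg i) j
        have e0 := h 0 0; have e1 := h 0 1; have e2 := h 0 2; have e3 := h 1 2
        simp [hv, Fin.sum_univ_four] at e0 e1 e2 e3
        intro i; fin_cases i <;> assumption
      rw [finrank_span_eq_card hli]
      simp
    · intro w hw
      obtain ⟨c, rfl⟩ := (Submodule.mem_span_range_iff_exists_fun _).1 hw
      simp [okuboN_explicit, hv, Fin.sum_univ_four, Matrix.vecHead, Matrix.vecTail,
        -mul_eq_zero, -neg_eq_zero, -neg_mul, -inv_eq_zero]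
      linear_combination (-(3:F)⁻¹ * (c 0)^2 * ω) * h1
end

section
/- Let ⋆ be a normalized symmetric composition on (S,n) and let α_⋆ : C(S,n) → End_F(S ⊕ S) be the algebra map induced from x ↦ ((u,v) ↦ (r_x(v), ℓ_x(u))). Let c be an invertible element of the even Clifford subalgebra C_0(S,n) such that c·σ(c) = 1, where σ is the canonical involution (reversal) of C(S,n), and such that c·ι(x)·c^{−1} ∈ ι(S) for all x ∈ S, where ι : S → C(S,n) is the canonical embedding. Define f : S → S by ι(f(x)) = c·ι(x)·c^{−1}, and let f₁, f₂ ∈ End_F(S) be the diagonal blocks of α_⋆(c), i.e., α_⋆(c)(u,v) = (f₁(u), f₂(v)). Then f, f₁, f₂ are isometries of (S,n) and f(x⋆y) = f₁(x) ⋆ f₂(y), f₁(x⋆y) = f₂(x) ⋆ f(y), and f₂(x⋆y) = f(x) ⋆ f₁(y) for all x,y ∈ S. -/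
/-- Let `⋆` be a normalized symmetric composition on `(S,n)` and
`α_⋆ : C(S,n) → End_F(S ⊕ S)` the induced algebra map. If `c` is an invertible even Clifford
element with `c·σ(c) = 1` (where `σ` is the reversal) normalizing `ι(S)`, with induced
conjugation `f` on `S` and diagonal blocks `f₁, f₂` of `α_⋆(c)`, then `f, f₁, f₂` are
isometries satisfying the three triality relations. -/
theorem statement19 (F : Type*) [Field F] (S : Type*) [AddCommGroup S] [Module F S]
    [FiniteDimensional F S] (hdim : Module.finrank F S = 8)
    (n : QuadraticForm F S)
    (hnd : ∀ x : S, (∀ y : S, QuadraticMap.polar n x y = 0) → x = 0)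
    (star : S →ₗ[F] S →ₗ[F] S)
    (hmul : ∀ x y : S, n (star x y) = n x * n y)
    (hassoc : ∀ x y z : S,
        QuadraticMap.polar n (star x y) z = QuadraticMap.polar n x (star y z))
    (α : CliffordAlgebra n →ₐ[F] Module.End F (S × S))
    (hα : ∀ (x : S) (w : S × S),
        α (CliffordAlgebra.ι n x) w = (star w.2 x, star x w.1))
    (c : CliffordAlgebra n) (hceven : c ∈ CliffordAlgebra.even n)
    (hcunit : IsUnit c)
    (hcσ : c * CliffordAlgebra.reverse c = 1)
    (f : S →ₗ[F] S)
    (hf : ∀ x : S, c * CliffordAlgebra.ι n x = CliffordAlgebra.ι n (f x) * c)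
    (f₁ f₂ : Module.End F S)
    (hblocks : ∀ w : S × S, α c w = (f₁ w.1, f₂ w.2)) :
    (∀ x : S, n (f x) = n x) ∧ Function.Bijective f ∧
    (∀ x : S, n (f₁ x) = n x) ∧ Function.Bijective f₁ ∧
    (∀ x : S, n (f₂ x) = n x) ∧ Function.Bijective f₂ ∧
    (∀ x y : S, f (star x y) = star (f₁ x) (f₂ y)) ∧
    (∀ x y : S, f₁ (star x y) = star (f₂ x) (f y)) ∧
    (∀ x y : S, f₂ (star x y) = star (f x) (f₁ y)) := by
  classical
  -- σ(c) is a two-sided inverse of c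
  have hσcc : CliffordAlgebra.reverse c * c = 1 := by
    obtain ⟨u, rfl⟩ := hcunit
    have h1 : (↑u⁻¹ : CliffordAlgebra n) = CliffordAlgebra.reverse (↑u : CliffordAlgebra n) :=
      Units.inv_eq_of_mul_eq_one_right hcσ
    rw [← h1]; exact u.inv_mul
  -- S is nontrivial
  have hS : Nontrivial S := by
    by_contra h
    rw [not_nontrivial_iff_subsingleton] at h
    have : Module.finrank F S = 0 := Module.finrank_zero_of_subsingleton
    rw [hdim] at this; exact (by norm_num : (8:ℕ) ≠ 0) this
  obtain ⟨s₀, hs₀⟩ := exists_ne (0 : S)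
  -- n(f x) = n x
  have hnf : ∀ x : S, n (f x) = n x := by
    intro x
    have h1 : (algebraMap F (CliffordAlgebra n)) (n (f x)) =
        (algebraMap F (CliffordAlgebra n)) (n x) := by
      have h2 : (algebraMap F (CliffordAlgebra n)) (n (f x)) * c
          = c * (algebraMap F (CliffordAlgebra n)) (n x) := by
        calc (algebraMap F (CliffordAlgebra n)) (n (f x)) * c
            = CliffordAlgebra.ι n (f x) * CliffordAlgebra.ι n (f x) * c := by
              rw [CliffordAlgebra.ι_sq_scalar]
          _ = CliffordAlgebra.ι n (f x) * (CliffordAlgebra.ι n (f x) * c) := by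
              rw [mul_assoc]
          _ = CliffordAlgebra.ι n (f x) * (c * CliffordAlgebra.ι n x) := by rw [← hf x]
          _ = (CliffordAlgebra.ι n (f x) * c) * CliffordAlgebra.ι n x := by rw [mul_assoc]
          _ = (c * CliffordAlgebra.ι n x) * CliffordAlgebra.ι n x := by rw [← hf x]
          _ = c * (CliffordAlgebra.ι n x * CliffordAlgebra.ι n x) := by rw [mul_assoc]
          _ = c * (algebraMap F (CliffordAlgebra n)) (n x) := by
              rw [CliffordAlgebra.ι_sq_scalar]
      calc (algebraMap F (CliffordAlgebra n)) (n (f x))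
          = (algebraMap F (CliffordAlgebra n)) (n (f x)) * (c * CliffordAlgebra.reverse c) := by
            rw [hcσ, mul_one]
        _ = ((algebraMap F (CliffordAlgebra n)) (n (f x)) * c) * CliffordAlgebra.reverse c := by
            rw [mul_assoc]
        _ = (c * (algebraMap F (CliffordAlgebra n)) (n x)) * CliffordAlgebra.reverse c := by
            rw [h2]
        _ = ((algebraMap F (CliffordAlgebra n)) (n x) * c) * CliffordAlgebra.reverse c := by
            rw [Algebra.commutes]
        _ = (algebraMap F (CliffordAlgebra n)) (n x) * (c * CliffordAlgebra.reverse c) := by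
            rw [mul_assoc]
        _ = (algebraMap F (CliffordAlgebra n)) (n x) := by rw [hcσ, mul_one]
    have h3 := congrArg α h1
    rw [AlgHom.commutes, AlgHom.commutes] at h3
    have h4 := congrArg (fun g : Module.End F (S × S) => g ((s₀, 0) : S × S)) h3
    simp only [Module.algebraMap_end_apply] at h4
    have h5 : (n (f x) - n x) • ((s₀, 0) : S × S) = 0 := by
      rw [sub_smul, h4, sub_self]
    rcases smul_eq_zero.mp h5 with h | h
    · exact sub_eq_zero.mp h
    · exact absurd (congrArg Prod.fst h) hs₀
  -- f preserves the polar form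
  have hPf : ∀ x y : S, QuadraticMap.polar n (f x) (f y) = QuadraticMap.polar n x y := by
    intro x y
    simp only [QuadraticMap.polar, ← map_add, hnf]
  -- f is bijective
  have hfinj : Function.Injective f := by
    rw [← LinearMap.ker_eq_bot, LinearMap.ker_eq_bot']
    intro m hm
    apply hnd
    intro y
    have := hPf m y
    rw [hm, QuadraticMap.polar_zero_left] at this
    exact this.symm
  have hfbij : Function.Bijective f := ⟨hfinj, LinearMap.injective_iff_surjective.mp hfinj⟩
  -- adjoint property: α (reverse a) is the adjoint of α a w.r.t. polar ⊕ polar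
  have hadj : ∀ a : CliffordAlgebra n, ∀ w w' : S × S,
      QuadraticMap.polar n (α a w).1 w'.1 + QuadraticMap.polar n (α a w).2 w'.2 =
      QuadraticMap.polar n w.1 (α (CliffordAlgebra.reverse a) w').1 +
      QuadraticMap.polar n w.2 (α (CliffordAlgebra.reverse a) w').2 := by
    intro a
    induction a using CliffordAlgebra.induction with
    | algebraMap r =>
      intro w w'
      rw [CliffordAlgebra.reverse.commutes, AlgHom.commutes]
      simp only [Module.algebraMap_end_apply, Prod.smul_fst, Prod.smul_snd,
        QuadraticMap.polar_smul_left, QuadraticMap.polar_smul_right]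
    | ι x =>
      intro w w'
      rw [CliffordAlgebra.reverse_ι]
      simp only [hα]
      rw [hassoc w.2 x w'.1, QuadraticMap.polar_comm n (star x w.1) w'.2,
        ← hassoc w'.2 x w.1, QuadraticMap.polar_comm n (star w'.2 x) w.1]
      rw [QuadraticMap.polar_comm n w.2 (star x w'.1)]
      ring
    | mul a b ha hb =>
      intro w w'
      rw [CliffordAlgebra.reverse.map_mul, map_mul, map_mul]
      rw [Module.End.mul_apply, Module.End.mul_apply]
      rw [ha (α b w) w', hb w (α (CliffordAlgebra.reverse a) w')]
    | add a b ha hb =>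
      intro w w'
      simp only [map_add, LinearMap.add_apply, Prod.fst_add, Prod.snd_add,
        QuadraticMap.polar_add_left, QuadraticMap.polar_add_right]
      linear_combination ha w w' + hb w w'
  -- α c preserves the direct-sum polar form
  have hpres : ∀ w w' : S × S,
      QuadraticMap.polar n (α c w).1 (α c w').1 + QuadraticMap.polar n (α c w).2 (α c w').2 =
      QuadraticMap.polar n w.1 w'.1 + QuadraticMap.polar n w.2 w'.2 := by
    intro w w'
    rw [hadj c w (α c w')]
    have : α (CliffordAlgebra.reverse c) (α c w') = w' := by
      rw [← Module.End.mul_apply, ← map_mul, hσcc, map_one, Module.End.one_apply]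
    rw [this]
  -- f₁ and f₂ preserve the polar form
  have hP1 : ∀ x y : S, QuadraticMap.polar n (f₁ x) (f₁ y) = QuadraticMap.polar n x y := by
    intro x y
    have := hpres (x, 0) (y, 0)
    simpa [hblocks] using this
  have hP2 : ∀ x y : S, QuadraticMap.polar n (f₂ x) (f₂ y) = QuadraticMap.polar n x y := by
    intro x y
    have := hpres ((0 : S), x) ((0 : S), y)
    simpa [hblocks] using this
  -- relations 2 and 3
  have hkey : ∀ x : S, ∀ w : S × S,
      α c (α (CliffordAlgebra.ι n x) w) = α (CliffordAlgebra.ι n (f x)) (α c w) := by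
    intro x w
    have := congrArg α (hf x)
    rw [map_mul, map_mul] at this
    calc α c (α (CliffordAlgebra.ι n x) w) = (α c * α (CliffordAlgebra.ι n x)) w := rfl
      _ = (α (CliffordAlgebra.ι n (f x)) * α c) w := by rw [this]
      _ = α (CliffordAlgebra.ι n (f x)) (α c w) := rfl
  have rel2 : ∀ x y : S, f₁ (star x y) = star (f₂ x) (f y) := by
    intro x y
    have := hkey y ((0 : S), x)
    rw [hα, hblocks, hα, hblocks] at this
    simpa using congrArg Prod.fst this
  have rel3 : ∀ x y : S, f₂ (star x y) = star (f x) (f₁ y) := by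
    intro x y
    have := hkey x (y, (0 : S))
    rw [hα, hblocks, hα, hblocks] at this
    simpa using congrArg Prod.snd this
  -- relation 1
  have rel1 : ∀ x y : S, f (star x y) = star (f₁ x) (f₂ y) := by
    intro x y
    have h0 : ∀ z : S, QuadraticMap.polar n (f (star x y) - star (f₁ x) (f₂ y)) z = 0 := by
      intro z
      obtain ⟨z', rfl⟩ := hfbij.2 z
      rw [QuadraticMap.polar_sub_left, hPf]
      have e1 : QuadraticMap.polar n (star x y) z' = QuadraticMap.polar n x (star y z') :=
        hassoc x y z'
      have e2 : QuadraticMap.polar n x (star y z')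
          = QuadraticMap.polar n (f₁ x) (f₁ (star y z')) := (hP1 x (star y z')).symm
      have e3 : f₁ (star y z') = star (f₂ y) (f z') := rel2 y z'
      have e4 : QuadraticMap.polar n (f₁ x) (star (f₂ y) (f z'))
          = QuadraticMap.polar n (star (f₁ x) (f₂ y)) (f z') := (hassoc _ _ _).symm
      rw [e1, e2, e3, e4, sub_self]
    have := hnd _ h0
    exact sub_eq_zero.mp this
  -- an anisotropic vector exists
  have hx0 : ∃ x₀ : S, n x₀ ≠ 0 := by
    by_contra h
    push_neg at h
    have hall : ∀ x : S, x = 0 := by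
      intro x
      apply hnd
      intro y
      simp [QuadraticMap.polar, h]
    exact hs₀ (hall s₀)
  obtain ⟨x₀, hx₀⟩ := hx0
  -- multiplier argument
  have hμa : ∀ x y : S, n (f₁ x) * n (f₂ y) = n x * n y := by
    intro x y
    have : n (f (star x y)) = n (star (f₁ x) (f₂ y)) := by rw [rel1]
    rw [hnf, hmul, hmul] at this
    exact this.symm
  have ha0 : n (f₁ x₀) ≠ 0 := by
    intro h
    have := hμa x₀ x₀
    rw [h, zero_mul] at this
    exact (mul_ne_zero hx₀ hx₀) this.symm
  have hb0 : n (f₂ x₀) ≠ 0 := by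
    intro h
    have := hμa x₀ x₀
    rw [h, mul_zero] at this
    exact (mul_ne_zero hx₀ hx₀) this.symm
  set μ : F := n (f₁ x₀) / n x₀ with hμdef
  have hμ0 : μ ≠ 0 := div_ne_zero ha0 hx₀
  have hf1μ : ∀ x : S, n (f₁ x) = μ * n x := by
    intro x
    have h1 := hμa x x₀
    have h2 := hμa x₀ x₀
    have e : (n (f₁ x) * n x₀) * n (f₂ x₀) = (n x * n (f₁ x₀)) * n (f₂ x₀) := by
      linear_combination n x₀ * h1 - n x * h2
    have key := mul_right_cancel₀ hb0 e
    rw [hμdef]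
    field_simp
    linear_combination key
  have hf2ν : ∀ y : S, n (f₂ y) = μ⁻¹ * n y := by
    intro y
    have h1 := hμa x₀ y
    rw [hμdef, inv_div]
    field_simp
    linear_combination h1
  -- μ² = 1 from relation 3
  have hμsq : μ * μ = 1 := by
    have h1 : n (f₂ (star x₀ x₀)) = n x₀ * n (f₁ x₀) := by
      rw [rel3, hmul, hnf]
    rw [hf2ν, hmul, hf1μ] at h1
    have h2 : μ * (μ⁻¹ * (n x₀ * n x₀)) = μ * (n x₀ * (μ * n x₀)) := by rw [h1]
    rw [← mul_assoc, mul_inv_cancel₀ hμ0, one_mul] at h2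
    have h3 : (μ * μ) * (n x₀ * n x₀) = 1 * (n x₀ * n x₀) := by linear_combination -h2
    exact mul_right_cancel₀ (mul_ne_zero hx₀ hx₀) h3
  -- 2μ = 2 from polar preservation
  have h2μ : 2 * μ * n x₀ = 2 * n x₀ := by
    have hps := hP1 x₀ x₀
    rw [QuadraticMap.polar_self, QuadraticMap.polar_self, hf1μ] at hps
    rw [nsmul_eq_mul, nsmul_eq_mul] at hps
    push_cast at hps
    linear_combination hps
  have hμ1 : μ = 1 := by
    have h2 : 2 * μ = 2 := by
      refine mul_right_cancel₀ hx₀ ?_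
      linear_combination h2μ
    have h4 : (μ - 1) * (μ - 1) = 0 := by linear_combination hμsq - h2
    exact sub_eq_zero.mp (mul_self_eq_zero.mp h4)
  have hnf1 : ∀ x : S, n (f₁ x) = n x := by intro x; rw [hf1μ, hμ1, one_mul]
  have hnf2 : ∀ x : S, n (f₂ x) = n x := by intro x; rw [hf2ν, hμ1, inv_one, one_mul]
  -- bijectivity of f₁ and f₂
  have hinj1 : Function.Injective f₁ := by
    rw [← LinearMap.ker_eq_bot, LinearMap.ker_eq_bot']
    intro m hm
    apply hnd
    intro y
    have := hP1 m y
    rw [hm, QuadraticMap.polar_zero_left] at this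
    exact this.symm
  have hinj2 : Function.Injective f₂ := by
    rw [← LinearMap.ker_eq_bot, LinearMap.ker_eq_bot']
    intro m hm
    apply hnd
    intro y
    have := hP2 m y
    rw [hm, QuadraticMap.polar_zero_left] at this
    exact this.symm
  have hbij1 : Function.Bijective f₁ := ⟨hinj1, LinearMap.injective_iff_surjective.mp hinj1⟩
  have hbij2 : Function.Bijective f₂ := ⟨hinj2, LinearMap.injective_iff_surjective.mp hinj2⟩
  exact ⟨hnf, hfbij, hnf1, hbij1, hnf2, hbij2, rel1, rel2, rel3⟩
end
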